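/- Let Γ be a simple graph on a vertex set V and let S ⊆ V be a set of vertices such that every vertex of S is adjacent to every vertex of the complement Sᶜ (Γ is the join of Γ[S] and Γ[Sᶜ]). Then A_Γ decomposes as a direct product: there is a group isomorphism A_Γ ≃* A_{Γ[S]} × A_{Γ[Sᶜ]} sending of v to (the corresponding generator of A_{Γ[S]}, 1) for v ∈ S and to (1, the corresponding generator of A_{Γ[Sᶜ]}) for v ∈ Sᶜ. -/

import Mathlib

/-- The set of commutator relators of a right-angled Artin group. -/
def raagRels {V : Type*} (Γ : SimpleGraph V) : Set (FreeGroup V) :=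
  {r | ∃ u v : V, Γ.Adj u v ∧
    r = FreeGroup.of u * FreeGroup.of v * (FreeGroup.of u)⁻¹ * (FreeGroup.of v)⁻¹}

/-- The right-angled Artin group of the graph `Γ`. -/
abbrev RAAG {V : Type*} (Γ : SimpleGraph V) : Type _ :=
  PresentedGroup (raagRels Γ)

/-- The canonical generator of `RAAG Γ` corresponding to a vertex. -/
def RAAG.of {V : Type*} (Γ : SimpleGraph V) (v : V) : RAAG Γ :=
  PresentedGroup.of v

/-- Adjacent generators commute in a RAAG. -/
lemma RAAG.commute_of_adj {V : Type*} {Γ : SimpleGraph V} {u v : V} (h : Γ.Adj u v) :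
    Commute (RAAG.of Γ u) (RAAG.of Γ v) := by
  have h0 : PresentedGroup.mk (raagRels Γ)
      (FreeGroup.of u * FreeGroup.of v * (FreeGroup.of u)⁻¹ * (FreeGroup.of v)⁻¹) = 1 := by
    apply (QuotientGroup.eq_one_iff _).mpr
    exact Subgroup.subset_normalClosure ⟨u, v, h, rfl⟩
  rw [map_mul, map_mul, map_inv, map_inv] at h0
  exact commutatorElement_eq_one_iff_commute.mp (by rw [commutatorElement_def]; exact h0)

theorem raag_direct_product_decomposition {V : Type*} (Γ : SimpleGraph V)
    (S : Set V) (hS : ∀ s ∈ S, ∀ t ∉ S, Γ.Adj s t) :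
    ∃ φ : RAAG Γ ≃* RAAG (Γ.induce S) × RAAG (Γ.induce Sᶜ),
      (∀ v : V, ∀ h : v ∈ S,
        φ (RAAG.of Γ v) = (RAAG.of (Γ.induce S) ⟨v, h⟩, 1)) ∧
      (∀ v : V, ∀ h : v ∉ S,
        φ (RAAG.of Γ v) = (1, RAAG.of (Γ.induce Sᶜ) ⟨v, h⟩)) := by
  classical
  set A := RAAG (Γ.induce S)
  set B := RAAG (Γ.induce Sᶜ)
  -- forward map
  set f : V → A × B := fun v =>
    if h : v ∈ S then (RAAG.of (Γ.induce S) ⟨v, h⟩, 1)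
    else (1, RAAG.of (Γ.induce Sᶜ) ⟨v, h⟩) with hf
  have hfrel : ∀ r ∈ raagRels Γ, FreeGroup.lift f r = 1 := by
    rintro r ⟨u, v, huv, rfl⟩
    simp only [map_mul, map_inv, FreeGroup.lift_apply_of]
    rw [← commutatorElement_def, commutatorElement_eq_one_iff_commute]
    by_cases hu : u ∈ S <;> by_cases hv : v ∈ S <;>
      simp only [hf, hu, hv, dif_pos, dif_neg, not_false_iff]
    · exact (RAAG.commute_of_adj (u := (⟨u, hu⟩ : S)) (v := ⟨v, hv⟩) huv).prod
        (Commute.one_left 1)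
    · exact Commute.prod (Commute.one_right _) (Commute.one_left _)
    · exact Commute.prod (Commute.one_left _) (Commute.one_right _)
    · exact (Commute.one_left 1).prod
        (RAAG.commute_of_adj (u := (⟨u, hu⟩ : ↥Sᶜ)) (v := ⟨v, hv⟩) huv)
  set φ' : RAAG Γ →* A × B := PresentedGroup.toGroup hfrel with hφ'
  have φ'of : ∀ v : V, φ' (RAAG.of Γ v) = f v := fun v => PresentedGroup.toGroup.of hfrel
  -- backward maps
  have hArel : ∀ r ∈ raagRels (Γ.induce S),
      FreeGroup.lift (fun v : S => RAAG.of Γ v.1) r = 1 := by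
    rintro r ⟨u, v, huv, rfl⟩
    simp only [map_mul, map_inv, FreeGroup.lift_apply_of]
    rw [← commutatorElement_def, commutatorElement_eq_one_iff_commute]
    exact RAAG.commute_of_adj (show Γ.Adj u.1 v.1 from huv)
  have hBrel : ∀ r ∈ raagRels (Γ.induce Sᶜ),
      FreeGroup.lift (fun v : ↥Sᶜ => RAAG.of Γ v.1) r = 1 := by
    rintro r ⟨u, v, huv, rfl⟩
    simp only [map_mul, map_inv, FreeGroup.lift_apply_of]
    rw [← commutatorElement_def, commutatorElement_eq_one_iff_commute]
    exact RAAG.commute_of_adj (show Γ.Adj u.1 v.1 from huv)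
  set gA : A →* RAAG Γ := PresentedGroup.toGroup hArel with hgA
  set gB : B →* RAAG Γ := PresentedGroup.toGroup hBrel with hgB
  have gAof : ∀ v : S, gA (RAAG.of (Γ.induce S) v) = RAAG.of Γ v.1 :=
    fun v => PresentedGroup.toGroup.of hArel
  have gBof : ∀ v : ↥Sᶜ, gB (RAAG.of (Γ.induce Sᶜ) v) = RAAG.of Γ v.1 :=
    fun v => PresentedGroup.toGroup.of hBrel
  have hcomm : ∀ (a : A) (b : B), Commute (gA a) (gB b) := by
    have key : ∀ (v : S) (b : B), Commute (RAAG.of Γ v.1) (gB b) := by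
      intro v b
      have hb : gB b ∈ Subgroup.centralizer {RAAG.of Γ v.1} := by
        apply PresentedGroup.generated_by _
          ((Subgroup.centralizer {RAAG.of Γ v.1}).comap gB) ?_ b
        intro t
        simp only [Subgroup.mem_comap]
        rw [show PresentedGroup.of t = RAAG.of (Γ.induce Sᶜ) t from rfl, gBof,
          Subgroup.mem_centralizer_singleton_iff]
        exact ((RAAG.commute_of_adj (hS v.1 v.2 t.1 t.2)).symm).eq
      rw [Subgroup.mem_centralizer_singleton_iff] at hb
      exact hb.symm
    intro a b
    have ha : gA a ∈ Subgroup.centralizer {gB b} := by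
      apply PresentedGroup.generated_by _ ((Subgroup.centralizer {gB b}).comap gA) ?_ a
      intro v
      simp only [Subgroup.mem_comap]
      rw [show PresentedGroup.of v = RAAG.of (Γ.induce S) v from rfl, gAof,
        Subgroup.mem_centralizer_singleton_iff]
      exact (key v b).eq
    rw [Subgroup.mem_centralizer_singleton_iff] at ha
    exact ha
  set ψ : A × B →* RAAG Γ := gA.noncommCoprod gB hcomm with hψ
  have ψap : ∀ (a : A) (b : B), ψ (a, b) = gA a * gB b := fun a b => rfl
  have hof : ∀ v : V, ∀ h : v ∈ S,
      φ' (RAAG.of Γ v) = (RAAG.of (Γ.induce S) ⟨v, h⟩, 1) := by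
    intro v h; rw [φ'of, hf]; simp [h]
  have hof' : ∀ v : V, ∀ h : v ∉ S,
      φ' (RAAG.of Γ v) = (1, RAAG.of (Γ.induce Sᶜ) ⟨v, h⟩) := by
    intro v h; rw [φ'of, hf]; simp [h]
  have h1 : ψ.comp φ' = MonoidHom.id _ := by
    ext v
    simp only [MonoidHom.comp_apply, MonoidHom.id_apply]
    rw [show PresentedGroup.of v = RAAG.of Γ v from rfl]
    by_cases h : v ∈ S
    · rw [hof v h, ψap, gAof, map_one, mul_one]
    · rw [hof' v h, ψap, gBof, map_one, one_mul]
  have h2 : φ'.comp ψ = MonoidHom.id _ := by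
    have hl : (φ'.comp ψ).comp (MonoidHom.inl A B) = MonoidHom.inl A B := by
      refine PresentedGroup.ext fun v => ?_
      simp only [MonoidHom.comp_apply, MonoidHom.inl_apply]
      rw [show (MonoidHom.inl A B) (PresentedGroup.of v) = ((RAAG.of (Γ.induce S) v), 1) from rfl,
        ψap, gAof, map_one, mul_one, hof v.1 v.2]
    have hr : (φ'.comp ψ).comp (MonoidHom.inr A B) = MonoidHom.inr A B := by
      refine PresentedGroup.ext fun v => ?_
      simp only [MonoidHom.comp_apply, MonoidHom.inr_apply]
      rw [show (MonoidHom.inr A B) (PresentedGroup.of v) = (1, (RAAG.of (Γ.induce Sᶜ) v)) from rfl,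
        ψap, gBof, map_one, one_mul, hof' v.1 v.2]
    apply MonoidHom.ext
    rintro ⟨a, b⟩
    have hab : ((a, b) : A × B) = (a, 1) * (1, b) := by simp
    rw [hab, map_mul, map_mul]
    have ha := DFunLike.congr_fun hl a
    have hb := DFunLike.congr_fun hr b
    simp only [MonoidHom.comp_apply, MonoidHom.inl_apply, MonoidHom.inr_apply] at ha hb ⊢
    rw [ha, hb]
    rfl
  refine ⟨MonoidHom.toMulEquiv φ' ψ h1 h2, ?_, ?_⟩
  · intro v h
    exact hof v h
  · intro v h
    exact hof' v h
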